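/- Let M be a Kripke model whose frame is a finite pre-Boolean algebra, and let w0 be an initial world of M (that is, R w0 u holds for every world u of M). Then there exist a Kripke model M+ whose frame is a finite topless pre-Boolean algebra and an initial world w0+ of M+ such that for every modal formula phi, phi is true at w0 in M if and only if phi is true at w0+ in M+. -/

import Mathlib

/-- Modal formulas: falsum, propositional variables, implication, Box. -/
inductive ModalFormula : Type
  | falsum : ModalFormula
  | var : ℕ → ModalFormula
  | impl : ModalFormula → ModalFormula → ModalFormula
  | box : ModalFormula → ModalFormula

namespace ModalFormula

/-- Negation: ¬φ := φ → ⊥. -/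
def neg (φ : ModalFormula) : ModalFormula := impl φ falsum

/-- Disjunction: φ ∨ ψ := ¬φ → ψ. -/
def disj (φ ψ : ModalFormula) : ModalFormula := impl (neg φ) ψ

/-- Conjunction: φ ∧ ψ := ¬(φ → ¬ψ). -/
def conj (φ ψ : ModalFormula) : ModalFormula := neg (impl φ (neg ψ))

/-- Diamond: ◇φ := ¬□¬φ. -/
def dia (φ : ModalFormula) : ModalFormula := neg (box (neg φ))

end ModalFormula

/-- A Kripke model: worlds, accessibility relation, valuation. -/
structure KripkeModel where
  W : Type
  R : W → W → Prop
  V : W → ℕ → Prop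

/-- Truth of a modal formula at a world of a Kripke model. -/
def KripkeModel.truth (M : KripkeModel) : M.W → ModalFormula → Prop
  | _, ModalFormula.falsum => False
  | w, ModalFormula.var n => M.V w n
  | w, ModalFormula.impl φ ψ => M.truth w φ → M.truth w ψ
  | w, ModalFormula.box φ => ∀ v, M.R w v → M.truth v φ

/-- A formula is valid on a frame (W, R) if it is true at every world of
every Kripke model with that frame. -/
def ValidOnFrame (W : Type) (R : W → W → Prop) (φ : ModalFormula) : Prop :=
  ∀ V : W → ℕ → Prop, ∀ w : W, KripkeModel.truth ⟨W, R, V⟩ w φ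

/-- A finite pre-Boolean algebra frame: a finite set `W` with a reflexive
transitive relation `R` such that for some finite set `A` there is a map `f`
from `W` onto the full powerset of `A` with `R w v ↔ f w ⊆ f v`. -/
def IsPreBooleanAlgebraFrame (W : Type) (R : W → W → Prop) : Prop :=
  Finite W ∧ (∀ w, R w w) ∧ (∀ w v u, R w v → R v u → R w u) ∧
    ∃ (A : Type) (_ : Finite A) (f : W → Set A),
      Function.Surjective f ∧ ∀ w v, R w v ↔ f w ⊆ f v

/-- A finite topless pre-Boolean algebra frame: a finite set `W` with a
reflexive transitive relation `R` such that for some finite nonempty set `A`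
there is a map `f` from `W` onto the collection of proper subsets of `A`
with `R w v ↔ f w ⊆ f v`. -/
def IsToplessPreBooleanAlgebraFrame (W : Type) (R : W → W → Prop) : Prop :=
  Finite W ∧ (∀ w, R w w) ∧ (∀ w v u, R w v → R v u → R w u) ∧
    ∃ (A : Type) (_ : Finite A) (_ : Nonempty A) (f : W → Set A),
      (∀ w, f w ≠ Set.univ) ∧ (∀ s : Set A, s ≠ Set.univ → ∃ w, f w = s) ∧
      ∀ w v, R w v ↔ f w ⊆ f v

open Classical in
/-- Projection from subsets of `Option A` to subsets of `A`. -/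
noncomputable def pbaPi {A : Type} (s : Set (Option A)) : Set A :=
  if none ∈ s then Set.univ else {a | some a ∈ s}

lemma pbaPi_mono {A : Type} {s t : Set (Option A)} (h : s ⊆ t) :
    pbaPi s ⊆ pbaPi t := by
  unfold pbaPi
  by_cases hs : none ∈ s
  · simp [hs, h hs]
  · by_cases ht : none ∈ t
    · simp [hs, ht]
    · simp only [hs, ht, if_neg, if_false]
      intro a ha
      exact h ha

lemma pbaPi_back {A : Type} {s : Set (Option A)} (hs : s ≠ Set.univ)
    (v : Set A) (hv : pbaPi s ⊆ v) :
    ∃ t : Set (Option A), t ≠ Set.univ ∧ s ⊆ t ∧ pbaPi t = v := by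
  by_cases hnone : none ∈ s
  · refine ⟨s, hs, subset_rfl, ?_⟩
    have hps : pbaPi s = Set.univ := by simp [pbaPi, hnone]
    have : v = Set.univ := Set.eq_univ_of_univ_subset (hps ▸ hv)
    rw [hps, this]
  · by_cases hv' : v = Set.univ
    · by_cases hall : ∀ a : A, some a ∈ s
      · refine ⟨s, hs, subset_rfl, ?_⟩
        simp only [pbaPi, hnone, if_neg, if_false]
        rw [hv']
        exact Set.eq_univ_of_forall hall
      · push_neg at hall
        obtain ⟨a, ha⟩ := hall
        refine ⟨s ∪ {none}, ?_, Set.subset_union_left, ?_⟩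
        · intro hcon
          have : some a ∈ s ∪ {none} := hcon ▸ Set.mem_univ _
          rcases this with h | h
          · exact ha h
          · simp at h
        · have : none ∈ s ∪ {none} := Or.inr rfl
          simp [pbaPi, this, hv']
    · refine ⟨some '' v, ?_, ?_, ?_⟩
      · intro hcon
        have : (none : Option A) ∈ some '' v := hcon ▸ Set.mem_univ _
        obtain ⟨a, _, ha⟩ := this
        exact Option.some_ne_none _ ha
      · intro x hx
        match x with
        | none => exact absurd hx hnone
        | some a =>
          have : a ∈ pbaPi s := by simp [pbaPi, hnone]; exact hx
          exact ⟨a, hv this, rfl⟩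
      · have hn : (none : Option A) ∉ some '' v := by
          intro h; obtain ⟨a, _, ha⟩ := h; exact Option.some_ne_none _ ha
        simp only [pbaPi, hn, if_neg, if_false]
        ext a
        simp

/-- Every Kripke model on a finite pre-Boolean algebra frame with an initial
world is equivalent, with respect to all modal formulas, to a Kripke model on
a finite topless pre-Boolean algebra frame at an initial world. -/
theorem preBooleanAlgebra_model_equivalent_to_topless (W : Type)
    (R : W → W → Prop) (V : W → ℕ → Prop)
    (hBA : IsPreBooleanAlgebraFrame W R) (w0 : W) (h0 : ∀ u : W, R w0 u) :
    ∃ (W' : Type) (R' : W' → W' → Prop) (V' : W' → ℕ → Prop) (w0' : W'),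
      IsToplessPreBooleanAlgebraFrame W' R' ∧ (∀ u : W', R' w0' u) ∧
      ∀ φ : ModalFormula,
        KripkeModel.truth ⟨W, R, V⟩ w0 φ ↔ KripkeModel.truth ⟨W', R', V'⟩ w0' φ := by
  classical
  obtain ⟨hWfin, hrefl, htrans, A, hAfin, f, hfsurj, hfR⟩ := hBA
  haveI := hAfin
  haveI := hWfin
  -- the new worlds
  let S : Type := {s : Set (Option A) // s ≠ Set.univ}
  have hS0 : (∅ : Set (Option A)) ≠ Set.univ := by
    intro h
    have : (none : Option A) ∈ (∅ : Set (Option A)) := h ▸ Set.mem_univ _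
    exact this
  -- the representative map
  let ρ : S → W → W := fun s w =>
    if f w = pbaPi s.val then w else (hfsurj (pbaPi s.val)).choose
  have hρ : ∀ (s : S) (w : W), f (ρ s w) = pbaPi s.val := by
    intro s w
    by_cases h : f w = pbaPi s.val
    · simp only [ρ, if_pos h]; exact h
    · simp only [ρ, if_neg h]; exact (hfsurj (pbaPi s.val)).choose_spec
  have hρfix : ∀ (s : S) (w : W), f w = pbaPi s.val → ρ s w = w := by
    intro s w h
    simp only [ρ, if_pos h]
  haveI := Fintype.ofFinite A
  haveI : Finite (Option A) := inferInstance
  haveI : Finite (Set (Option A)) := inferInstance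
  haveI : Finite S := Subtype.finite
  refine ⟨S × W, fun p q => p.1.val ⊆ q.1.val, fun p n => V (ρ p.1 p.2) n,
    (⟨∅, hS0⟩, w0), ?_, ?_, ?_⟩
  · refine ⟨?_, fun _ => subset_rfl, fun _ _ _ h1 h2 => h1.trans h2,
      Option A, inferInstance, ⟨none⟩, fun p => p.1.val, fun p => p.1.2,
      fun s hs => ⟨(⟨s, hs⟩, w0), rfl⟩, fun _ _ => Iff.rfl⟩
    exact Finite.instProd
  · intro u
    exact Set.empty_subset _
  · -- key bisimulation lemma
    have key : ∀ (φ : ModalFormula) (s : S) (w : W),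
        KripkeModel.truth ⟨S × W, fun p q => p.1.val ⊆ q.1.val,
          fun p n => V (ρ p.1 p.2) n⟩ (s, w) φ ↔
        KripkeModel.truth ⟨W, R, V⟩ (ρ s w) φ := by
      intro φ
      induction φ with
      | falsum => intro s w; exact Iff.rfl
      | var n => intro s w; exact Iff.rfl
      | impl φ ψ ihφ ihψ =>
        intro s w
        exact Iff.imp (ihφ s w) (ihψ s w)
      | box φ ih =>
        intro s w
        constructor
        · intro h v hv
          have hv' : R (ρ s w) v := hv
          have hsub : pbaPi s.val ⊆ f v := hρ s w ▸ (hfR _ _).mp hv'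
          obtain ⟨t, ht, hst, hπ⟩ := pbaPi_back s.2 (f v) hsub
          have := (ih ⟨t, ht⟩ v).mp (h (⟨t, ht⟩, v) hst)
          rwa [hρfix ⟨t, ht⟩ v hπ.symm] at this
        · intro h q hq
          refine (ih q.1 q.2).mpr (h _ ?_)
          show R (ρ s w) (ρ q.1 q.2)
          rw [hfR, hρ, hρ]
          exact pbaPi_mono hq
    intro φ
    have hw0 : f w0 = pbaPi (∅ : Set (Option A)) := by
      have h1 : f w0 = ∅ := by
        obtain ⟨u, hu⟩ := hfsurj ∅
        exact Set.subset_eq_empty (hu ▸ (hfR w0 u).mp (h0 u)) rfl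
      have h2 : pbaPi (∅ : Set (Option A)) = ∅ := by
        have : (none : Option A) ∉ (∅ : Set (Option A)) := fun h => h
        simp [pbaPi, this]
      rw [h1, h2]
    have := key φ ⟨∅, hS0⟩ w0
    rw [hρfix ⟨∅, hS0⟩ w0 hw0] at this
    exact this.symm
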